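/- Let p be a prime and m ∈ ℕ. For every r ≥ 1 and all i₁, …, i_r ∈ ℕ with i₁ + ⋯ + i_r = d, the rational number (d!/q^(m)_d!)·∏_{j=1}^{r} (q^(m)_{i_j}!/i_j!) lies in ℤ_p; equivalently, ∏_{j=1}^{r} (q^(m)_{i_j}!/i_j!) ∈ (q^(m)_d!/d!)·ℤ_p. -/

import Mathlib

/-!
STATEMENT 5: Let `p` be a prime and `m : ℕ`. For every `r ≥ 1` and all
`i₁, …, i_r : ℕ` with `i₁ + ⋯ + i_r = d`, the rational number
`(d!/q^(m)_d!) · ∏_{j=1}^{r} (q^(m)_{i_j}!/i_j!)` lies in `ℤ_[p]`;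
equivalently `∏_{j=1}^{r} (q^(m)_{i_j}!/i_j!) ∈ (q^(m)_d!/d!)·ℤ_[p]`.

Here `q^(m)_n = ⌊n/p^m⌋`.
-/

/-- `q^(m)_n = ⌊n / p^m⌋`. -/
def qm (p m n : ℕ) : ℕ := n / p ^ m

open Finset in
lemma padicValNat_prod {p : ℕ} [Fact p.Prime] {α : Type*} (s : Finset α) (f : α → ℕ)
    (hf : ∀ a ∈ s, f a ≠ 0) :
    padicValNat p (∏ a ∈ s, f a) = ∑ a ∈ s, padicValNat p (f a) := by
  classical
  induction s using Finset.induction with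
  | empty => simp
  | @insert a s h ih =>
    rw [Finset.prod_insert h, Finset.sum_insert h,
      padicValNat.mul (hf a (mem_insert_self a s))
        (Finset.prod_ne_zero_iff.2 fun b hb => hf b (mem_insert_of_mem hb)),
      ih fun b hb => hf b (mem_insert_of_mem hb)]

lemma legendre_split (p : ℕ) [hp : Fact p.Prime] (m k : ℕ) :
    padicValNat p k.factorial =
      padicValNat p (qm p m k).factorial + ∑ t ∈ Finset.Ico 1 (m + 1), k / p ^ t := by
  have hlog : Nat.log p (k / p ^ m) ≤ Nat.log p k := Nat.log_mono_right (Nat.div_le_self _ _)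
  rw [show qm p m k = k / p ^ m from rfl]
  rw [padicValNat_factorial (p := p) (b := m + (Nat.log p k + 1)) (by omega),
      padicValNat_factorial (p := p) (b := Nat.log p k + 1) (by omega)]
  have h3 : ∑ i ∈ Finset.Ico 1 (Nat.log p k + 1), k / p ^ m / p ^ i
      = ∑ i ∈ Finset.Ico (m + 1) (m + (Nat.log p k + 1)), k / p ^ i := by
    rw [Finset.sum_Ico_eq_sum_range, Finset.sum_Ico_eq_sum_range]
    apply Finset.sum_congr (by congr 1; omega)
    intro x _
    rw [Nat.div_div_eq_div_mul, ← pow_add]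
    congr 2
    omega
  rw [h3, add_comm (∑ i ∈ Finset.Ico (m + 1) (m + (Nat.log p k + 1)), k / p ^ i),
      ← Finset.sum_union (Finset.Ico_disjoint_Ico_consecutive _ _ _),
      Finset.Ico_union_Ico_eq_Ico (by omega) (by omega)]

theorem qfac_prod_integral (p : ℕ) [Fact p.Prime] (m r d : ℕ) (hr : 1 ≤ r)
    (i : Fin r → ℕ) (hd : ∑ j, i j = d) :
    ∃ z : ℤ_[p], (z : ℚ_[p]) =
      ((d.factorial : ℚ_[p]) / ((qm p m d).factorial : ℚ_[p])) *
        ∏ j : Fin r, (((qm p m (i j)).factorial : ℚ_[p]) / ((i j).factorial : ℚ_[p])) := by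
  set N : ℕ := d.factorial * ∏ j : Fin r, (qm p m (i j)).factorial with hN
  set M : ℕ := (qm p m d).factorial * ∏ j : Fin r, (i j).factorial with hM
  have hNne : N ≠ 0 := by
    positivity
  have hMne : M ≠ 0 := by
    positivity
  -- valuation inequality
  have key : padicValNat p M ≤ padicValNat p N := by
    have hvN : padicValNat p N = padicValNat p d.factorial +
        ∑ j : Fin r, padicValNat p (qm p m (i j)).factorial := by
      rw [hN, padicValNat.mul (Nat.factorial_ne_zero d)
        (Finset.prod_ne_zero_iff.2 fun b _ => Nat.factorial_ne_zero _),
        padicValNat_prod _ _ fun b _ => Nat.factorial_ne_zero _]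
    have hvM : padicValNat p M = padicValNat p (qm p m d).factorial +
        ∑ j : Fin r, padicValNat p (i j).factorial := by
      rw [hM, padicValNat.mul (Nat.factorial_ne_zero _)
        (Finset.prod_ne_zero_iff.2 fun b _ => Nat.factorial_ne_zero _),
        padicValNat_prod _ _ fun b _ => Nat.factorial_ne_zero _]
    rw [hvN, hvM, legendre_split p m d]
    have hsum : ∀ j : Fin r, padicValNat p (i j).factorial =
        padicValNat p (qm p m (i j)).factorial + ∑ t ∈ Finset.Ico 1 (m + 1), i j / p ^ t :=
      fun j => legendre_split p m (i j)
    simp only [hsum, Finset.sum_add_distrib]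
    have hle : ∑ j : Fin r, ∑ t ∈ Finset.Ico 1 (m + 1), i j / p ^ t ≤
        ∑ t ∈ Finset.Ico 1 (m + 1), d / p ^ t := by
      rw [Finset.sum_comm]
      apply Finset.sum_le_sum
      intro t _
      rw [Nat.le_div_iff_mul_le (pow_pos (Fact.out (p := p.Prime)).pos t), Finset.sum_mul]
      calc ∑ j : Fin r, i j / p ^ t * p ^ t ≤ ∑ j : Fin r, i j :=
            Finset.sum_le_sum fun j _ => Nat.div_mul_le_self _ _
        _ = d := hd
    omega
  -- the rational number
  set q : ℚ := (N : ℚ) / (M : ℚ) with hq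
  have hqne : q ≠ 0 := div_ne_zero (by exact_mod_cast hNne) (by exact_mod_cast hMne)
  have hval : 0 ≤ padicValRat p q := by
    rw [hq, padicValRat.div (by exact_mod_cast hNne) (by exact_mod_cast hMne),
      padicValRat.of_nat, padicValRat.of_nat]
    have : (padicValNat p M : ℤ) ≤ (padicValNat p N : ℤ) := by exact_mod_cast key
    omega
  have hnorm : ‖((q : ℚ) : ℚ_[p])‖ ≤ 1 := by
    rw [Padic.eq_padicNorm]
    have : padicNorm p q ≤ 1 := by
      rw [padicNorm.eq_zpow_of_nonzero hqne]
      apply zpow_le_one_of_nonpos₀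
      · exact_mod_cast (Fact.out (p := p.Prime)).one_le
      · omega
    exact_mod_cast this
  refine ⟨⟨((q : ℚ) : ℚ_[p]), hnorm⟩, ?_⟩
  show ((q : ℚ) : ℚ_[p]) = _
  rw [hq, hN, hM]
  push_cast
  rw [Finset.prod_div_distrib, div_mul_div_comm]
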